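/- arXiv:2007.13175 — 2 statements merged into one kernel-verified Lean document; each statement's English description precedes it below -/
import Mathlib

section
/- If n parties contain at most f < n/2 faulty parties, and the parties are partitioned into two sets of sizes ⌈n/2⌉ and ⌊n/2⌋, then at least one of the two sets Q satisfies: the number of faulty parties in Q is at most ⌊(|Q|−1)/2⌋ (i.e., honest parties form a strict majority in that set). -/
/-- If `n` parties contain `f < n/2` faulty parties and are partitioned into
halves of sizes `⌈n/2⌉` and `⌊n/2⌋`, then one half `Q` has at most
`⌊(|Q|−1)/2⌋` faulty parties. -/
theorem one_half_has_minority_faults (n : ℕ) (F Q₁ Q₂ : Finset (Fin n))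
    (hf : 2 * F.card < n)
    (hcard₁ : Q₁.card = (n + 1) / 2) (hcard₂ : Q₂.card = n / 2)
    (hdisj : Disjoint Q₁ Q₂) (hunion : Q₁ ∪ Q₂ = Finset.univ) :
    (F ∩ Q₁).card ≤ (Q₁.card - 1) / 2 ∨ (F ∩ Q₂).card ≤ (Q₂.card - 1) / 2 := by
  have hsum : (F ∩ Q₁).card + (F ∩ Q₂).card = F.card := by
    rw [← Finset.card_union_of_disjoint (hdisj.mono Finset.inter_subset_right
      Finset.inter_subset_right), ← Finset.inter_union_distrib_left, hunion,
      Finset.inter_univ]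
  omega
end

section
/- Validity of the expander GBA: if all honest parties (at least n − f of n, f ≤ (1/2 − ε)n) input the same value v, then: (1) an echo-certificate forms only for v; (2) all honest parties send vote-1 for v, so a vote1-certificate for v forms and none forms for v' ≠ v; (3) all honest parties propagate C¹(v) and vote-2 for v, so C²(v) forms; (4) all honest parties output (v, 1). -/
/-- A certificate for value `w`: signatures `sig` on `w` from at least `n − f`
distinct parties. -/
def cert {V : Type} (n f : ℕ) (sig : Fin n → V → Prop) (w : V) : Prop :=
  ∃ Q : Finset (Fin n), n - f ≤ Q.card ∧ ∀ r ∈ Q, sig r w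

/-- Validity of the expander GBA: if all honest parties input the same
value `v` and follow the protocol rules of Figure 3, then (1) echo-certificates
form only for `v`; (2) all honest parties vote-1 for `v`, a vote1-certificate
for `v` forms and none forms for `v' ≠ v`; (3) a vote2-certificate for `v`
forms; (4) all honest parties output `(v, 1)`. -/
theorem expander_gba_validity {V : Type} (n f : ℕ) (hn : 0 < n) (ε : ℝ)
    (hε : 0 < ε) (hf : (f : ℝ) ≤ (1 / 2 - ε) * n)
    (F : Finset (Fin n)) (hF : F.card ≤ f)
    (echo vote1 vote2 vote3 : Fin n → V → Prop)
    (out : Fin n → V × Bool) (v : V)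
    -- honest parties echo exactly their common input `v`
    (hecho_send : ∀ r : Fin n, r ∉ F → echo r v)
    (hecho_only : ∀ r : Fin n, r ∉ F → ∀ w, echo r w → w = v)
    -- honest parties vote-1 for `v` when the echo-certificate for `v` is unique
    (hv1_send : ∀ r : Fin n, r ∉ F →
      (cert n f echo v ∧ ∀ w, cert n f echo w → w = v) → vote1 r v)
    (hv1_only : ∀ r : Fin n, r ∉ F → ∀ w, vote1 r w → cert n f echo w)
    -- honest parties vote-2 and vote-3 for `v` upon a vote1-certificate
    (hv2_send : ∀ r : Fin n, r ∉ F → cert n f vote1 v → vote2 r v)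
    (hv3_send : ∀ r : Fin n, r ∉ F → cert n f vote1 v → vote3 r v)
    -- output rule: value from `f+1` vote-3 messages, grade 1 from `C²(v)`
    (hout : ∀ r : Fin n, r ∉ F →
      (∃ B : Finset (Fin n), f + 1 ≤ B.card ∧ ∀ s ∈ B, vote3 s v) →
      cert n f vote2 v → out r = (v, true)) :
    (∀ w, cert n f echo w → w = v) ∧
    (∀ r : Fin n, r ∉ F → vote1 r v) ∧
    cert n f vote1 v ∧ (∀ w, cert n f vote1 w → w = v) ∧
    cert n f vote2 v ∧
    (∀ r : Fin n, r ∉ F → out r = (v, true)) := by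
    -- basic arithmetic: 2f < n
  have h2f : 2 * f < n := by
    by_contra h
    push_neg at h
    have hn' : (n : ℝ) ≤ 2 * f := by exact_mod_cast h
    have hεn : 0 < ε * n := mul_pos hε (by exact_mod_cast hn)
    nlinarith
  have hflt : f < n - f := by omega
  -- honest parties form a big set
  have hcompl : n - f ≤ Fᶜ.card := by
    have := Finset.card_compl (F : Finset (Fin n))
    simp [this, Fintype.card_fin]
    omega
  -- any certificate contains an honest party
  have honest_in_cert : ∀ (sig : Fin n → V → Prop) (w : V), cert n f sig w →
      ∃ r, r ∉ F ∧ sig r w := by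
    rintro sig w ⟨Q, hQcard, hQ⟩
    have : (Q \ F).Nonempty := by
      rw [← Finset.card_pos]
      have := Finset.le_card_sdiff F Q
      have hQF : F.card < Q.card := by omega
      omega
    obtain ⟨r, hr⟩ := this
    rw [Finset.mem_sdiff] at hr
    exact ⟨r, hr.2, hQ r hr.1⟩
  -- (1) echo certs only for v
  have h1 : ∀ w, cert n f echo w → w = v := by
    intro w hw
    obtain ⟨r, hrF, hre⟩ := honest_in_cert echo w hw
    exact hecho_only r hrF w hre
  -- echo cert for v exists
  have hcertv : cert n f echo v :=
    ⟨Fᶜ, hcompl, fun r hr => hecho_send r (Finset.mem_compl.mp hr)⟩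
  -- (2) honest vote1 for v
  have h2 : ∀ r : Fin n, r ∉ F → vote1 r v := fun r hr =>
    hv1_send r hr ⟨hcertv, h1⟩
  have h3 : cert n f vote1 v :=
    ⟨Fᶜ, hcompl, fun r hr => h2 r (Finset.mem_compl.mp hr)⟩
  have h4 : ∀ w, cert n f vote1 w → w = v := by
    intro w hw
    obtain ⟨r, hrF, hrv⟩ := honest_in_cert vote1 w hw
    exact h1 w (hv1_only r hrF w hrv)
  have h5 : cert n f vote2 v :=
    ⟨Fᶜ, hcompl, fun r hr => hv2_send r (Finset.mem_compl.mp hr) h3⟩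
  have hB : ∃ B : Finset (Fin n), f + 1 ≤ B.card ∧ ∀ s ∈ B, vote3 s v := by
    refine ⟨Fᶜ, by omega, fun s hs => hv3_send s (Finset.mem_compl.mp hs) h3⟩
  exact ⟨h1, h2, h3, h4, h5, fun r hr => hout r hr hB h5⟩
end
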